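/- arXiv:2206.10431 — 2 statements merged into one kernel-verified Lean document; each statement's English description precedes it below -/
import Mathlib

section
/- Let H be an n×n real symmetric matrix with bosonic form H̃ = H₋ − H₊, and let e₀ be the first standard basis vector. For every β ≥ 0, ⟨e₀| exp(−βH̃) |e₀⟩ ≥ ⟨e₀| exp(−βH) |e₀⟩; i.e., the state non-stoquasticity indicator S(H, e₀) is nonnegative. -/
open Matrix Filter

/-- The positive off-diagonal part `H₊` of a real matrix:
`(H₊)ᵢⱼ = Hᵢⱼ` if `i ≠ j` and `Hᵢⱼ > 0`, and `0` otherwise. -/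
noncomputable def Hplus {n : ℕ} (H : Matrix (Fin n) (Fin n) ℝ) : Matrix (Fin n) (Fin n) ℝ :=
  Matrix.of fun i j => if i ≠ j ∧ 0 < H i j then H i j else 0

/-- The remaining part `H₋ := H - H₊`. -/
noncomputable def Hminus {n : ℕ} (H : Matrix (Fin n) (Fin n) ℝ) : Matrix (Fin n) (Fin n) ℝ :=
  H - Hplus H

/-- The bosonic form `H̃ := H₋ - H₊` of `H`. -/
noncomputable def bosonic {n : ℕ} (H : Matrix (Fin n) (Fin n) ℝ) : Matrix (Fin n) (Fin n) ℝ :=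
  Hminus H - Hplus H

/-- The entrywise L1 norm `‖M‖_{L1} = ∑ᵢⱼ |Mᵢⱼ|`. -/
noncomputable def L1 {n : ℕ} (M : Matrix (Fin n) (Fin n) ℝ) : ℝ :=
  ∑ i, ∑ j, |M i j|

/-- `α = maxᵢ Hᵢᵢ`, the largest diagonal entry. -/
noncomputable def alphaMax {n : ℕ} [NeZero n] (H : Matrix (Fin n) (Fin n) ℝ) : ℝ :=
  ⨆ i, H i i

open NormedSpace in
private lemma matrix_exp_hasSum {n : ℕ} (A : Matrix (Fin n) (Fin n) ℝ) :
    HasSum (fun k : ℕ => (k.factorial : ℝ)⁻¹ • A ^ k) (exp A) := by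
  letI : SeminormedRing (Matrix (Fin n) (Fin n) ℝ) := Matrix.linftyOpSemiNormedRing
  letI : NormedRing (Matrix (Fin n) (Fin n) ℝ) := Matrix.linftyOpNormedRing
  letI : NormedAlgebra ℝ (Matrix (Fin n) (Fin n) ℝ) := Matrix.linftyOpNormedAlgebra
  rw [exp_eq_tsum ℝ]
  exact (expSeries_summable' (𝕂 := ℝ) A).hasSum

open NormedSpace in
private lemma matrix_exp_entry_hasSum {n : ℕ} (A : Matrix (Fin n) (Fin n) ℝ) (i j : Fin n) :
    HasSum (fun k : ℕ => (k.factorial : ℝ)⁻¹ * ((A ^ k) i j)) (exp A i j) := by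
  have h := (matrix_exp_hasSum A).map (Matrix.entryAddMonoidHom ℝ i j)
    (continuous_id.matrix_elem i j)
  exact h

open NormedSpace in
private lemma exp_entry_le {n : ℕ} {A B : Matrix (Fin n) (Fin n) ℝ}
    (hAB : ∀ i j, |A i j| ≤ B i j) (i j : Fin n) :
    exp A i j ≤ exp B i j := by
  have hpow : ∀ k : ℕ, ∀ i j, |(A ^ k) i j| ≤ (B ^ k) i j := by
    intro k
    induction k with
    | zero =>
      intro i j
      simp only [pow_zero, Matrix.one_apply]
      split_ifs <;> simp
    | succ k ih =>
      intro i j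
      rw [pow_succ, pow_succ, Matrix.mul_apply, Matrix.mul_apply]
      calc |∑ l, (A ^ k) i l * A l j| ≤ ∑ l, |(A ^ k) i l * A l j| :=
            Finset.abs_sum_le_sum_abs _ _
        _ ≤ ∑ l, (B ^ k) i l * B l j := by
            refine Finset.sum_le_sum fun l _ => ?_
            rw [abs_mul]
            exact mul_le_mul (ih i l) (hAB l j) (abs_nonneg _)
              ((abs_nonneg _).trans (ih i l))
  refine hasSum_le (fun k => ?_) (matrix_exp_entry_hasSum A i j) (matrix_exp_entry_hasSum B i j)
  have h1 : (A ^ k) i j ≤ (B ^ k) i j := (le_abs_self _).trans (hpow k i j)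
  have h2 : (0:ℝ) ≤ (k.factorial : ℝ)⁻¹ := by positivity
  exact mul_le_mul_of_nonneg_left h1 h2

open NormedSpace in
private lemma exp_shift {n : ℕ} (M : Matrix (Fin n) (Fin n) ℝ) (c : ℝ) :
    exp M = Real.exp (-c) • exp (M + c • 1) := by
  have hM : M = (M + c • (1 : Matrix (Fin n) (Fin n) ℝ)) + (-c) • 1 := by
    rw [add_assoc, ← add_smul]
    simp
  have hcomm : Commute (M + c • (1 : Matrix (Fin n) (Fin n) ℝ))
      ((-c) • (1 : Matrix (Fin n) (Fin n) ℝ)) := (Commute.one_right _).smul_right _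
  conv_lhs => rw [hM]
  rw [Matrix.exp_add_of_commute _ _ hcomm]
  have h1 : ((-c) • (1 : Matrix (Fin n) (Fin n) ℝ)) = algebraMap ℝ _ (-c) :=
    (Algebra.algebraMap_eq_smul_one _).symm
  letI : SeminormedRing (Matrix (Fin n) (Fin n) ℝ) := Matrix.linftyOpSemiNormedRing
  letI : NormedRing (Matrix (Fin n) (Fin n) ℝ) := Matrix.linftyOpNormedRing
  letI : NormedAlgebra ℝ (Matrix (Fin n) (Fin n) ℝ) := Matrix.linftyOpNormedAlgebra
  have h2 : exp (algebraMap ℝ (Matrix (Fin n) (Fin n) ℝ) (-c)) =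
      algebraMap ℝ (Matrix (Fin n) (Fin n) ℝ) (Real.exp (-c)) := by
    rw [Real.exp_eq_exp_ℝ]; exact (algebraMap_exp_comm (-c)).symm
  rw [h1, h2, Algebra.algebraMap_eq_smul_one,
    mul_smul_comm, mul_one]

open NormedSpace in
private lemma exp_diag_nonneg {n : ℕ} {M : Matrix (Fin n) (Fin n) ℝ} (hM : M.IsSymm) (i : Fin n) :
    0 ≤ exp M i i := by
  have h2 : M = (2 : ℕ) • ((2:ℝ)⁻¹ • M) := by
    rw [two_smul, ← add_smul]
    norm_num
  have hsymm : ((2:ℝ)⁻¹ • M).IsSymm := hM.smul _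
  have hexp : (exp ((2:ℝ)⁻¹ • M)).IsSymm := hsymm.exp
  rw [h2, Matrix.exp_nsmul, sq, Matrix.mul_apply]
  refine Finset.sum_nonneg fun l _ => ?_
  rw [hexp.apply l i]
  exact mul_self_nonneg _

private lemma bosonic_apply {n : ℕ} (H : Matrix (Fin n) (Fin n) ℝ) (i j : Fin n) :
    bosonic H i j = if i = j then H i j else -|H i j| := by
  simp only [bosonic, Hminus, Hplus, Matrix.sub_apply, Matrix.of_apply]
  by_cases h : i = j
  · simp [h]
  · rw [if_neg h]
    by_cases hp : 0 < H i j
    · rw [if_pos (⟨h, hp⟩ : i ≠ j ∧ 0 < H i j), abs_of_pos hp]; ring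
    · rw [if_neg (fun hc : i ≠ j ∧ 0 < H i j => hp hc.2), abs_of_nonpos (not_lt.1 hp)]; ring

/-- For a real symmetric matrix `H` with bosonic form `H̃ = H₋ - H₊`, the first standard basis
vector `e₀`, and any `β ≥ 0`, `⟨e₀|e^{-βH̃}|e₀⟩ ≥ ⟨e₀|e^{-βH}|e₀⟩`; i.e. the state
non-stoquasticity indicator `S(H, e₀)` is nonnegative. -/
theorem state_nsi_nonneg {n : ℕ} [NeZero n] (H : Matrix (Fin n) (Fin n) ℝ) (hH : H.IsSymm)
    (β : ℝ) (hβ : 0 ≤ β) :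
    (NormedSpace.exp (-β • H)) 0 0 ≤ (NormedSpace.exp (-β • bosonic H)) 0 0 ∧
    0 ≤ ((NormedSpace.exp (-β • bosonic H)) 0 0 - (NormedSpace.exp (-β • H)) 0 0) /
        (NormedSpace.exp (-β • H)) 0 0 := by

  classical
  set c : ℝ := β * L1 H with hc
  have hL1 : ∀ i, H i i ≤ L1 H := by
    intro i
    calc H i i ≤ |H i i| := le_abs_self _
      _ ≤ ∑ j, |H i j| :=
          Finset.single_le_sum (f := fun j => |H i j|) (fun _ _ => abs_nonneg _)
            (Finset.mem_univ i)
      _ ≤ L1 H :=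
          Finset.single_le_sum (f := fun i => ∑ j, |H i j|)
            (fun _ _ => Finset.sum_nonneg fun _ _ => abs_nonneg _) (Finset.mem_univ i)
  have hAB : ∀ i j, |(-β • H + c • 1) i j| ≤ (-β • bosonic H + c • 1) i j := by
    intro i j
    rcases eq_or_ne i j with h | h
    · subst h
      have hb : bosonic H i i = H i i := by rw [bosonic_apply]; simp
      simp only [Matrix.add_apply, Matrix.smul_apply, Matrix.one_apply_eq, hb, smul_eq_mul,
        mul_one]
      rw [abs_of_nonneg]
      have := mul_le_mul_of_nonneg_left (hL1 i) hβ
      rw [hc]; nlinarith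
    · have hb : bosonic H i j = -|H i j| := by rw [bosonic_apply, if_neg h]
      simp only [Matrix.add_apply, Matrix.smul_apply, Matrix.one_apply_ne h, hb, smul_eq_mul,
        mul_zero, add_zero]
      rw [abs_mul, abs_neg, abs_of_nonneg hβ]
      nlinarith [abs_nonneg (H i j)]
  have key : NormedSpace.exp (-β • H + c • 1) 0 0 ≤
      NormedSpace.exp (-β • bosonic H + c • 1) 0 0 := exp_entry_le hAB 0 0
  have e1 := exp_shift (-β • H) c
  have e2 := exp_shift (-β • bosonic H) c
  have h1 : NormedSpace.exp (-β • H) 0 0 ≤ NormedSpace.exp (-β • bosonic H) 0 0 := by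
    rw [e1, e2, Matrix.smul_apply, Matrix.smul_apply, smul_eq_mul, smul_eq_mul]
    exact mul_le_mul_of_nonneg_left key (Real.exp_pos _).le
  have hsymm : (-β • H).IsSymm := hH.smul _
  exact ⟨h1, div_nonneg (sub_nonneg.2 h1) (exp_diag_nonneg hsymm 0)⟩
end

section
/- Let A and B be arbitrary n×n real matrices and e₀ the first standard basis vector. Then |⟨e₀| (exp(A + B) − exp(A − B)) |e₀⟩| ≤ 2·exp(‖A‖_{L1})·sinh(‖B‖_{L1}), where ‖M‖_{L1} := Σ_{i,j} |M_{ij}|. -/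
open Matrix

section Aux

variable {n : ℕ}

lemma L1_nonneg (M : Matrix (Fin n) (Fin n) ℝ) : 0 ≤ L1 M := by
  apply Finset.sum_nonneg; intro i _; apply Finset.sum_nonneg; intro j _; positivity

lemma abs_entry_le_L1 (M : Matrix (Fin n) (Fin n) ℝ) (i j : Fin n) : |M i j| ≤ L1 M := by
  calc |M i j| ≤ ∑ j', |M i j'| :=
        Finset.single_le_sum (f := fun j' => |M i j'|) (fun _ _ => abs_nonneg _) (Finset.mem_univ j)
    _ ≤ L1 M :=
        Finset.single_le_sum (f := fun i' => ∑ j', |M i' j'|)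
          (fun _ _ => Finset.sum_nonneg fun _ _ => abs_nonneg _) (Finset.mem_univ i)

lemma L1_add_le (M N : Matrix (Fin n) (Fin n) ℝ) : L1 (M + N) ≤ L1 M + L1 N := by
  unfold L1
  rw [← Finset.sum_add_distrib]
  apply Finset.sum_le_sum; intro i _
  rw [← Finset.sum_add_distrib]
  apply Finset.sum_le_sum; intro j _
  exact abs_add_le _ _

lemma L1_mul_le (M N : Matrix (Fin n) (Fin n) ℝ) : L1 (M * N) ≤ L1 M * L1 N := by
  unfold L1
  calc ∑ i, ∑ j, |(M * N) i j| ≤ ∑ i, ∑ j, ∑ k, |M i k| * |N k j| := by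
        apply Finset.sum_le_sum; intro i _; apply Finset.sum_le_sum; intro j _
        simpa [Matrix.mul_apply, abs_mul] using Finset.abs_sum_le_sum_abs
          (fun k => M i k * N k j) Finset.univ
    _ = ∑ i, ∑ k, ∑ j, |M i k| * |N k j| :=
        Finset.sum_congr rfl fun i _ => Finset.sum_comm
    _ = ∑ k, ∑ i, ∑ j, |M i k| * |N k j| := Finset.sum_comm
    _ = ∑ k, (∑ i, |M i k|) * (∑ j, |N k j|) := by
        simp_rw [Finset.sum_mul, Finset.mul_sum]
    _ ≤ ∑ k, (∑ i, ∑ k', |M i k'|) * (∑ j, |N k j|) := by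
        apply Finset.sum_le_sum; intro k _
        apply mul_le_mul_of_nonneg_right _ (Finset.sum_nonneg fun _ _ => abs_nonneg _)
        apply Finset.sum_le_sum; intro i _
        exact Finset.single_le_sum (f := fun k' => |M i k'|) (fun _ _ => abs_nonneg _)
          (Finset.mem_univ k)
    _ = (∑ i, ∑ k', |M i k'|) * ∑ k, ∑ j, |N k j| := (Finset.mul_sum _ _ _).symm

lemma key_joint (A B : Matrix (Fin n) (Fin n) ℝ) (m : ℕ) :
    L1 ((A+B)^(m+1) - (A-B)^(m+1)) ≤ (L1 A + L1 B)^(m+1) - (L1 A - L1 B)^(m+1) ∧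
    L1 ((A+B)^(m+1) + (A-B)^(m+1)) ≤ (L1 A + L1 B)^(m+1) + (L1 A - L1 B)^(m+1) := by
  induction m with
  | zero =>
    constructor
    · have h : (A+B)^1 - (A-B)^1 = B + B := by noncomm_ring
      rw [h]
      calc L1 (B + B) ≤ L1 B + L1 B := L1_add_le B B
        _ ≤ (L1 A + L1 B)^1 - (L1 A - L1 B)^1 := by ring_nf; linarith []
    · have h : (A+B)^1 + (A-B)^1 = A + A := by noncomm_ring
      rw [h]
      calc L1 (A + A) ≤ L1 A + L1 A := L1_add_le A A
        _ ≤ (L1 A + L1 B)^1 + (L1 A - L1 B)^1 := by ring_nf; linarith []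
  | succ m ih =>
    obtain ⟨ihD, ihS⟩ := ih
    have hD : (A+B)^(m+2) - (A-B)^(m+2) =
        ((A+B)^(m+1) + (A-B)^(m+1)) * B + ((A+B)^(m+1) - (A-B)^(m+1)) * A := by
      rw [pow_succ (A+B) (m+1), pow_succ (A-B) (m+1)]
      generalize (A+B)^(m+1) = P
      generalize (A-B)^(m+1) = Q
      noncomm_ring
    have hS : (A+B)^(m+2) + (A-B)^(m+2) =
        ((A+B)^(m+1) + (A-B)^(m+1)) * A + ((A+B)^(m+1) - (A-B)^(m+1)) * B := by
      rw [pow_succ (A+B) (m+1), pow_succ (A-B) (m+1)]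
      generalize (A+B)^(m+1) = P
      generalize (A-B)^(m+1) = Q
      noncomm_ring
    have hdR : (L1 A + L1 B)^(m+2) - (L1 A - L1 B)^(m+2) =
        ((L1 A + L1 B)^(m+1) + (L1 A - L1 B)^(m+1)) * L1 B +
        ((L1 A + L1 B)^(m+1) - (L1 A - L1 B)^(m+1)) * L1 A := by ring
    have hsR : (L1 A + L1 B)^(m+2) + (L1 A - L1 B)^(m+2) =
        ((L1 A + L1 B)^(m+1) + (L1 A - L1 B)^(m+1)) * L1 A +
        ((L1 A + L1 B)^(m+1) - (L1 A - L1 B)^(m+1)) * L1 B := by ring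
    constructor
    · rw [hD, hdR]
      calc L1 _ ≤ L1 (((A+B)^(m+1) + (A-B)^(m+1)) * B) + L1 (((A+B)^(m+1) - (A-B)^(m+1)) * A) :=
            L1_add_le _ _
        _ ≤ L1 ((A+B)^(m+1) + (A-B)^(m+1)) * L1 B + L1 ((A+B)^(m+1) - (A-B)^(m+1)) * L1 A :=
            add_le_add (L1_mul_le _ _) (L1_mul_le _ _)
        _ ≤ _ := add_le_add
            (mul_le_mul_of_nonneg_right ihS (L1_nonneg B))
            (mul_le_mul_of_nonneg_right ihD (L1_nonneg A))
    · rw [hS, hsR]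
      calc L1 _ ≤ L1 (((A+B)^(m+1) + (A-B)^(m+1)) * A) + L1 (((A+B)^(m+1) - (A-B)^(m+1)) * B) :=
            L1_add_le _ _
        _ ≤ L1 ((A+B)^(m+1) + (A-B)^(m+1)) * L1 A + L1 ((A+B)^(m+1) - (A-B)^(m+1)) * L1 B :=
            add_le_add (L1_mul_le _ _) (L1_mul_le _ _)
        _ ≤ _ := add_le_add
            (mul_le_mul_of_nonneg_right ihS (L1_nonneg A))
            (mul_le_mul_of_nonneg_right ihD (L1_nonneg B))

lemma keyD (A B : Matrix (Fin n) (Fin n) ℝ) (m : ℕ) :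
    L1 ((A+B)^m - (A-B)^m) ≤ (L1 A + L1 B)^m - (L1 A - L1 B)^m := by
  cases m with
  | zero => simp [L1]
  | succ m => exact (key_joint A B m).1

lemma L1_one : L1 (1 : Matrix (Fin n) (Fin n) ℝ) = n := by
  simp [L1, Matrix.one_apply, apply_ite abs]

lemma L1_pow_le (X : Matrix (Fin n) (Fin n) ℝ) (m : ℕ) : L1 (X ^ m) ≤ n * (L1 X) ^ m := by
  induction m with
  | zero => simp [L1_one]
  | succ m ih =>
    rw [pow_succ]
    calc L1 (X^m * X) ≤ L1 (X^m) * L1 X := L1_mul_le _ _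
      _ ≤ (n * (L1 X)^m) * L1 X := mul_le_mul_of_nonneg_right ih (L1_nonneg X)
      _ = n * (L1 X)^(m+1) := by ring

lemma entrySummable (X : Matrix (Fin n) (Fin n) ℝ) (i j : Fin n) :
    Summable (fun m : ℕ => ((m.factorial : ℝ))⁻¹ * (X ^ m) i j) := by
  have hmaj : Summable (fun m : ℕ => (n : ℝ) * ((L1 X) ^ m / m.factorial)) :=
    (Real.summable_pow_div_factorial (L1 X)).mul_left _
  refine Summable.of_abs (hmaj.of_nonneg_of_le (fun m => abs_nonneg _) (fun m => ?_))
  have h1 : |(X ^ m) i j| ≤ n * L1 X ^ m :=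
    le_trans (abs_entry_le_L1 _ _ _) (L1_pow_le X m)
  have h2 : (0:ℝ) ≤ ((m.factorial : ℝ))⁻¹ := by positivity
  calc |((m.factorial : ℝ))⁻¹ * (X ^ m) i j| = ((m.factorial : ℝ))⁻¹ * |(X ^ m) i j| := by
        rw [abs_mul, abs_of_nonneg h2]
    _ ≤ ((m.factorial : ℝ))⁻¹ * (n * L1 X ^ m) := mul_le_mul_of_nonneg_left h1 h2
    _ = n * (L1 X ^ m / m.factorial) := by ring

lemma expSummable (X : Matrix (Fin n) (Fin n) ℝ) :
    Summable (fun m : ℕ => ((m.factorial : ℝ))⁻¹ • X ^ m) := by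
  apply Pi.summable.mpr
  intro i
  rw [Pi.summable]
  intro j
  simpa [Matrix.smul_apply, smul_eq_mul] using entrySummable X i j

lemma exp_entry (X : Matrix (Fin n) (Fin n) ℝ) (i j : Fin n) :
    (NormedSpace.exp X) i j = ∑' m : ℕ, ((m.factorial : ℝ))⁻¹ * (X ^ m) i j := by
  rw [NormedSpace.exp_eq_tsum ℝ]
  beta_reduce
  erw [tsum_apply (expSummable X), tsum_apply (Pi.summable.mp (expSummable X) i)]
  simp [Matrix.smul_apply]

lemma abs_tsum_le' {f : ℕ → ℝ} (h : Summable fun m => |f m|) :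
    |∑' m, f m| ≤ ∑' m, |f m| := by
  have h' : Summable fun m => ‖f m‖ := h
  have h2 := norm_tsum_le_tsum_norm h'
  simpa using h2

lemma real_exp_tsum (x : ℝ) : Real.exp x = ∑' m : ℕ, x ^ m / m.factorial := by
  rw [Real.exp_eq_exp_ℝ, NormedSpace.exp_eq_tsum_div]

end Aux

set_option maxHeartbeats 1000000 in
/-- For arbitrary real `n×n` matrices `A`, `B` and the first standard basis vector `e₀`
(so that `⟨e₀|M|e₀⟩` is the top-left entry `M 0 0`),
`|⟨e₀|(exp(A+B) - exp(A-B))|e₀⟩| ≤ 2 exp(‖A‖_{L1}) sinh(‖B‖_{L1})`. -/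
theorem abs_entry_exp_sub_exp_le {n : ℕ} [NeZero n] (A B : Matrix (Fin n) (Fin n) ℝ) :
    |(NormedSpace.exp (A + B) - NormedSpace.exp (A - B)) 0 0| ≤
      2 * Real.exp (L1 A) * Real.sinh (L1 B) := by
  set a := L1 A with ha
  set b := L1 B with hb
  have hsum1 := entrySummable (A+B) (0 : Fin n) 0
  have hsum2 := entrySummable (A-B) (0 : Fin n) 0
  have hEntry : (NormedSpace.exp (A + B) - NormedSpace.exp (A - B)) 0 0
      = ∑' m : ℕ, ((m.factorial:ℝ))⁻¹ * (((A+B)^m - (A-B)^m) 0 0) := by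
    rw [Matrix.sub_apply, exp_entry, exp_entry, ← Summable.tsum_sub hsum1 hsum2]
    congr 1; ext m; rw [Matrix.sub_apply]; ring
  have hg : Summable (fun m : ℕ => (a+b)^m / m.factorial - (a-b)^m / m.factorial) :=
    (Real.summable_pow_div_factorial _).sub (Real.summable_pow_div_factorial _)
  have hbound : ∀ m : ℕ, |((m.factorial:ℝ))⁻¹ * (((A+B)^m - (A-B)^m) 0 0)| ≤
      (a+b)^m / m.factorial - (a-b)^m / m.factorial := by
    intro m
    have h2 : (0:ℝ) ≤ ((m.factorial : ℝ))⁻¹ := by positivity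
    have h1 : |((A+B)^m - (A-B)^m) 0 0| ≤ (a+b)^m - (a-b)^m :=
      le_trans (abs_entry_le_L1 _ _ _) (keyD A B m)
    calc |((m.factorial:ℝ))⁻¹ * (((A+B)^m - (A-B)^m) 0 0)|
        = ((m.factorial:ℝ))⁻¹ * |((A+B)^m - (A-B)^m) 0 0| := by
          rw [abs_mul, abs_of_nonneg h2]
      _ ≤ ((m.factorial:ℝ))⁻¹ * ((a+b)^m - (a-b)^m) := mul_le_mul_of_nonneg_left h1 h2
      _ = (a+b)^m / m.factorial - (a-b)^m / m.factorial := by ring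
  have habs : Summable (fun m : ℕ => |((m.factorial:ℝ))⁻¹ * (((A+B)^m - (A-B)^m) 0 0)|) :=
    hg.of_nonneg_of_le (fun m => abs_nonneg _) hbound
  rw [hEntry]
  calc |∑' m : ℕ, ((m.factorial:ℝ))⁻¹ * (((A+B)^m - (A-B)^m) 0 0)|
      ≤ ∑' m : ℕ, |((m.factorial:ℝ))⁻¹ * (((A+B)^m - (A-B)^m) 0 0)| :=
        abs_tsum_le' habs
    _ ≤ ∑' m : ℕ, ((a+b)^m / m.factorial - (a-b)^m / m.factorial) :=
        Summable.tsum_le_tsum hbound habs hg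
    _ = (∑' m : ℕ, (a+b)^m / m.factorial) - ∑' m : ℕ, (a-b)^m / m.factorial :=
        Summable.tsum_sub (Real.summable_pow_div_factorial _) (Real.summable_pow_div_factorial _)
    _ = Real.exp (a+b) - Real.exp (a-b) := by rw [real_exp_tsum, real_exp_tsum]
    _ = 2 * Real.exp a * Real.sinh b := by
        rw [Real.sinh_eq, Real.exp_add, Real.exp_sub, Real.exp_neg]
        ring
end
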